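/- arXiv:2401.05874 — 3 statements merged into one kernel-verified Lean document; each statement's English description precedes it below -/
import Mathlib

section
/- Suppose c : ℕ → ℝ satisfies c(n) = C·n^{−κ}·exp(A·n^λ)·(1 + o(1)) as n → ∞, with constants C > 0, A > 0, κ ∈ ℝ, and 0 < λ < 1. Then for all sufficiently large a and b we have c(a)·c(b) > c(a+b). -/
open Filter Real

lemma gap_aux {l x y : ℝ} (hl0 : 0 < l) (hl1 : l < 1) (hx : 0 < x) (hxy : x ≤ y) :
    (x+y)^l ≤ l * x^l + y^l := by
  have hy : 0 < y := hx.trans_le hxy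
  have hdiv : (0:ℝ) ≤ x / y := by positivity
  have hs : x + y = y * (1 + x/y) := by field_simp; ring
  have hb : (1 + x/y)^l ≤ 1 + l * (x/y) :=
    rpow_one_add_le_one_add_mul_self (by linarith) hl0.le hl1.le
  have hyl : (0:ℝ) ≤ y ^ l := Real.rpow_nonneg hy.le l
  have step1 : (x+y)^l ≤ y^l * (1 + l * (x/y)) := by
    rw [hs, Real.mul_rpow hy.le (by positivity)]
    exact mul_le_mul_of_nonneg_left hb hyl
  have hyl1 : y ^ (l-1) ≤ x ^ (l-1) :=
    Real.rpow_le_rpow_of_nonpos hx hxy (by linarith)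
  have hxl : x * x^(l-1) = x^l := by
    rw [mul_comm, ← Real.rpow_add_one hx.ne' (l-1)]; ring_nf
  have hyd : y^l / y = y^(l-1) := by
    rw [Real.rpow_sub hy l 1, Real.rpow_one]
  have step2 : y^l * (1 + l * (x/y)) = y^l + l * (x * (y^l / y)) := by
    field_simp
  have step3 : x * (y^l/y) ≤ x^l := by
    rw [hyd, ← hxl]
    exact mul_le_mul_of_nonneg_left hyl1 hx.le
  have := mul_le_mul_of_nonneg_left step3 hl0.le
  linarith [step1, step2.symm ▸ step1]

-- symmetric version: x^l + y^l - (x+y)^l ≥ (1-l) * (min x y)^l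
lemma gap_min {l x y : ℝ} (hl0 : 0 < l) (hl1 : l < 1) (hx : 0 < x) (hy : 0 < y) :
    (1-l) * (min x y)^l + (x+y)^l ≤ x^l + y^l := by
  rcases le_total x y with h | h
  · rw [min_eq_left h]
    have := gap_aux hl0 hl1 hx h
    linarith
  · rw [min_eq_right h]
    have := gap_aux hl0 hl1 hy h
    rw [add_comm y x] at this
    linarith

set_option maxHeartbeats 1000000 in
theorem stmt_11 (c : ℕ → ℝ) (C A k l : ℝ) (hC : 0 < C) (hA : 0 < A)
    (hl0 : 0 < l) (hl1 : l < 1)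
    (hc : Tendsto (fun n : ℕ => c n * (n : ℝ) ^ k * Real.exp (-A * (n : ℝ) ^ l))
      atTop (nhds C)) :
    ∃ N : ℕ, ∀ a b : ℕ, N ≤ a → N ≤ b → c a * c b > c (a + b) := by
  set f : ℕ → ℝ := fun n => c n * (n : ℝ) ^ k * Real.exp (-A * (n : ℝ) ^ l) with hf
  have h1 : ∀ᶠ n : ℕ in atTop, C/2 < f n := hc.eventually_const_lt (by linarith)
  have h2 : ∀ᶠ n : ℕ in atTop, f n < 3*C/2 := hc.eventually_lt_const (by linarith)
  have hb' : 0 < A*(1-l) := mul_pos hA (by linarith)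
  -- penalty tends to zero
  have ht0 : Tendsto (fun u : ℝ => u ^ (|k|/l) * Real.exp (-(A*(1-l)) * u)) atTop (nhds 0) :=
    tendsto_rpow_mul_exp_neg_mul_atTop_nhds_zero _ _ hb'
  have ht1 : Tendsto (fun m : ℕ => (m:ℝ)^l) atTop atTop :=
    (tendsto_rpow_atTop hl0).comp tendsto_natCast_atTop_atTop
  have ht2 : Tendsto (fun m : ℕ => (m:ℝ)^|k| * Real.exp (-(A*(1-l)) * (m:ℝ)^l))
      atTop (nhds 0) := by
    refine (ht0.comp ht1).congr fun m => ?_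
    have : ((m:ℝ)^l) ^ (|k|/l) = (m:ℝ)^|k| := by
      rw [← Real.rpow_mul (Nat.cast_nonneg m) l (|k|/l), mul_div_cancel₀ _ hl0.ne']
    simp [Function.comp, this]
  have ht3 : Tendsto (fun m : ℕ => (2*(m:ℝ))^|k| * Real.exp (-(A*(1-l)) * (m:ℝ)^l))
      atTop (nhds 0) := by
    have := ht2.const_mul ((2:ℝ)^|k|)
    rw [mul_zero] at this
    refine this.congr' ?_
    filter_upwards [eventually_ge_atTop 1] with m hm
    rw [Real.mul_rpow (by norm_num) (Nat.cast_nonneg m)]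
    ring
  have h3 : ∀ᶠ m : ℕ in atTop,
      (2*(m:ℝ))^|k| * Real.exp (-(A*(1-l)) * (m:ℝ)^l) < C/6 :=
    ht3.eventually_lt_const (by positivity)
  have H := (h1.and (h2.and h3)).and (eventually_ge_atTop 1)
  rw [eventually_atTop] at H
  obtain ⟨N, hN⟩ := H
  use N + 1
  intro a b ha hb
  have ha' : N ≤ a := le_trans (Nat.le_succ N) ha
  have hb'' : N ≤ b := le_trans (Nat.le_succ N) hb
  obtain ⟨⟨hfa, hfa2, -⟩, ha1⟩ := hN a ha'
  obtain ⟨⟨hfb, hfb2, -⟩, hb1⟩ := hN b hb''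
  obtain ⟨⟨-, hfs2, -⟩, -⟩ := hN (a+b) (le_trans ha' (Nat.le_add_right a b))
  set m := min a b with hm
  obtain ⟨⟨-, -, hpen⟩, hm1⟩ := hN m (le_min ha' hb'')
  -- real variables
  set x : ℝ := (a:ℝ) with hxdef
  set y : ℝ := (b:ℝ) with hydef
  have hx : 0 < x := by rw [hxdef]; exact_mod_cast Nat.lt_of_lt_of_le Nat.zero_lt_one ha1
  have hy : 0 < y := by rw [hydef]; exact_mod_cast Nat.lt_of_lt_of_le Nat.zero_lt_one hb1
  have hx1 : 1 ≤ x := by rw [hxdef]; exact_mod_cast ha1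
  have hy1 : 1 ≤ y := by rw [hydef]; exact_mod_cast hb1
  have hmr : (m:ℝ) = min x y := by
    simp only [hm, hxdef, hydef]; push_cast; rfl
  set mr : ℝ := (m:ℝ) with hmrdef
  have hmr0 : 0 < mr := by rw [hmr]; exact lt_min hx hy
  have hmr1 : 1 ≤ mr := by rw [hmrdef]; exact_mod_cast hm1
  have hs : 0 < x + y := by linarith
  have hcast : ((a+b : ℕ) : ℝ) = x + y := by push_cast; ring
  -- formula for c
  have hcn : ∀ n : ℕ, 0 < (n:ℝ) →
      c n = f n * (n:ℝ)^(-k) * Real.exp (A * (n:ℝ)^l) := by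
    intro n hn
    have hk0 : (n:ℝ)^k ≠ 0 := (Real.rpow_pos_of_pos hn k).ne'
    have he0 : Real.exp (A * (n:ℝ)^l) ≠ 0 := (Real.exp_pos _).ne'
    rw [hf]
    simp only []
    rw [Real.rpow_neg hn.le, neg_mul, Real.exp_neg]
    field_simp
  have hca : c a = f a * x^(-k) * Real.exp (A * x^l) := hcn a hx
  have hcb : c b = f b * y^(-k) * Real.exp (A * y^l) := hcn b hy
  have hcs : c (a+b) = f (a+b) * (x+y)^(-k) * Real.exp (A * (x+y)^l) := by
    have := hcn (a+b) (by rw [hcast]; exact hs)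
    rwa [hcast] at this
  -- positivity of pieces
  have hX : 0 < x^(-k) * Real.exp (A * x^l) := by positivity
  have hY : 0 < y^(-k) * Real.exp (A * y^l) := by positivity
  have hS : 0 < (x+y)^(-k) * Real.exp (A * (x+y)^l) := by positivity
  -- Step C: from hpen, (2*mr)^|k| < C/6 * exp (A*(1-l) * mr^l)
  have hC6 : (2*mr)^|k| < C/6 * Real.exp (A*(1-l) * mr^l) := by
    have hepos : 0 < Real.exp (A*(1-l) * mr^l) := Real.exp_pos _
    have := mul_lt_mul_of_pos_right hpen hepos
    rw [mul_assoc, ← Real.exp_add, neg_mul, neg_add_cancel, Real.exp_zero, mul_one] at this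
    exact this
  -- Step B: power inequality
  have hpow : (2*mr)^(-|k|) * (x+y)^(-k) ≤ x^(-k) * y^(-k) := by
    set t : ℝ := (x+y)/(x*y) with htdef
    have ht : 0 < t := by positivity
    have htlo : 1/(2*mr) ≤ t := by
      have h1t : 1/mr ≤ t := by
        rw [htdef, hmr, div_le_div_iff₀ (lt_min hx hy) (by positivity)]
        rcases le_total x y with h | h
        · rw [min_eq_left h]; nlinarith
        · rw [min_eq_right h]; nlinarith
      have : 1/(2*mr) ≤ 1/mr := by
        apply div_le_div_of_nonneg_left one_pos.le hmr0; linarith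
      linarith
    have hthi : t ≤ 2*mr := by
      rw [htdef, div_le_iff₀ (by positivity)]
      have : x + y ≤ 2*(x*y) := by nlinarith
      nlinarith
    have key : (2*mr)^(-|k|) ≤ t^k := by
      rcases le_or_gt 0 k with hk | hk
      · rw [abs_of_nonneg hk, Real.rpow_neg (by positivity), ← Real.inv_rpow (by positivity)]
        exact Real.rpow_le_rpow (by positivity) (by rw [← one_div]; exact htlo) hk
      · rw [abs_of_neg hk, neg_neg]
        exact Real.rpow_le_rpow_of_nonpos ht hthi hk.le
    have hteq : t^k = (x+y)^k * ((x*y)^k)⁻¹ := by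
      rw [htdef, Real.div_rpow hs.le (by positivity)]
      rw [div_eq_mul_inv]
    calc (2*mr)^(-|k|) * (x+y)^(-k) ≤ t^k * (x+y)^(-k) :=
          mul_le_mul_of_nonneg_right key (Real.rpow_nonneg hs.le _)
      _ = x^(-k) * y^(-k) := by
          rw [hteq, ← Real.mul_rpow hx.le hy.le, Real.rpow_neg (by positivity : (0:ℝ) ≤ x*y),
            Real.rpow_neg hs.le]
          field_simp
  -- Step A: exponent inequality
  have hexp : A*(1-l) * mr^l + A * (x+y)^l ≤ A * x^l + A * y^l := by
    have := gap_min hl0 hl1 hx hy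
    rw [← hmr] at this
    nlinarith [this, hA.le]
  -- combine: P * S ≤ X * Y
  have hPS : ((2*mr)^(-|k|) * Real.exp (A*(1-l) * mr^l)) *
      ((x+y)^(-k) * Real.exp (A * (x+y)^l)) ≤
      (x^(-k) * Real.exp (A * x^l)) * (y^(-k) * Real.exp (A * y^l)) := by
    have e1 : ((2*mr)^(-|k|) * Real.exp (A*(1-l) * mr^l)) *
        ((x+y)^(-k) * Real.exp (A * (x+y)^l)) =
        ((2*mr)^(-|k|) * (x+y)^(-k)) * Real.exp (A*(1-l) * mr^l + A * (x+y)^l) := by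
      rw [Real.exp_add]; ring
    have e2 : (x^(-k) * Real.exp (A * x^l)) * (y^(-k) * Real.exp (A * y^l)) =
        (x^(-k) * y^(-k)) * Real.exp (A * x^l + A * y^l) := by
      rw [Real.exp_add]; ring
    rw [e1, e2]
    exact mul_le_mul hpow (Real.exp_le_exp.mpr hexp) (Real.exp_pos _).le
      (by positivity)
  -- Step C': (C/2)*(C/2) * P > 3*C/2
  have hCP : 3*C/2 < (C/2)*(C/2) * ((2*mr)^(-|k|) * Real.exp (A*(1-l) * mr^l)) := by
    have hq : 0 < (2*mr)^|k| := Real.rpow_pos_of_pos (by positivity) _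
    have h6C : 6/C < (2*mr)^(-|k|) * Real.exp (A*(1-l) * mr^l) := by
      rw [Real.rpow_neg (by positivity : (0:ℝ) ≤ 2*mr), lt_inv_mul_iff₀ hq]
      calc (2*mr)^|k| * (6/C) < (C/6 * Real.exp (A*(1-l)*mr^l)) * (6/C) :=
            mul_lt_mul_of_pos_right hC6 (by positivity)
        _ = Real.exp (A*(1-l)*mr^l) := by field_simp
    calc 3*C/2 = (C/2)*(C/2) * (6/C) := by field_simp; ring
      _ < _ := by
          apply mul_lt_mul_of_pos_left h6C (by positivity)
  -- final chain
  rw [hca, hcb, hcs]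
  calc f (a+b) * (x+y)^(-k) * Real.exp (A * (x+y)^l)
      = f (a+b) * ((x+y)^(-k) * Real.exp (A * (x+y)^l)) := by ring
    _ < (3*C/2) * ((x+y)^(-k) * Real.exp (A * (x+y)^l)) :=
        mul_lt_mul_of_pos_right hfs2 hS
    _ < ((C/2)*(C/2) * ((2*mr)^(-|k|) * Real.exp (A*(1-l) * mr^l))) *
        ((x+y)^(-k) * Real.exp (A * (x+y)^l)) :=
        mul_lt_mul_of_pos_right hCP hS
    _ = (C/2)*(C/2) * (((2*mr)^(-|k|) * Real.exp (A*(1-l) * mr^l)) *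
        ((x+y)^(-k) * Real.exp (A * (x+y)^l))) := by ring
    _ ≤ (C/2)*(C/2) * ((x^(-k) * Real.exp (A * x^l)) * (y^(-k) * Real.exp (A * y^l))) :=
        mul_le_mul_of_nonneg_left hPS (by positivity)
    _ ≤ (f a * f b) * ((x^(-k) * Real.exp (A * x^l)) * (y^(-k) * Real.exp (A * y^l))) := by
        apply mul_le_mul_of_nonneg_right _ (by positivity)
        have : 0 < C/2 := by positivity
        nlinarith
    _ = f a * x^(-k) * Real.exp (A * x^l) * (f b * y^(-k) * Real.exp (A * y^l)) := by ring
end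

section
/- For all n ≥ 1, the order n! of S_n divides the number of ℓ-tuples (π₁,…,π_ℓ) ∈ S_nˡ whose components pairwise commute, for every ℓ ≥ 1. -/
open MulAction

section

variable (G : Type*) [Group G]

def CommTuple (m : ℕ) := {f : Fin m → G // ∀ j k, f j * f k = f k * f j}

instance (m : ℕ) : MulAction G (CommTuple G m) where
  smul g f := ⟨fun i => g * f.1 i * g⁻¹, by
    intro j k
    have h := f.2 j k
    simp only [mul_assoc, inv_mul_cancel_left]
    rw [← mul_assoc (f.1 j), h, mul_assoc]⟩
  one_smul f := Subtype.ext <| funext fun i => by simp [HSMul.hSMul, SMul.smul]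
  mul_smul g h f := Subtype.ext <| funext fun i => by
    simp [HSMul.hSMul, SMul.smul, mul_assoc]

lemma commTuple_smul_apply (m : ℕ) (g : G) (f : CommTuple G m) (i : Fin m) :
    (g • f).1 i = g * f.1 i * g⁻¹ := rfl

def commTupleEquiv (m : ℕ) :
    {f : Fin (m + 1) → G // ∀ j k, f j * f k = f k * f j} ≃
      Σ g : G, fixedBy (CommTuple G m) g where
  toFun f := ⟨f.1 0, ⟨fun i => f.1 i.succ, fun j k => f.2 _ _⟩, by
    refine Subtype.ext <| funext fun i => ?_
    show f.1 0 * f.1 i.succ * (f.1 0)⁻¹ = f.1 i.succ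
    rw [f.2 0 i.succ, mul_inv_cancel_right]⟩
  invFun x := ⟨Fin.cons x.1 x.2.1.1, by
    have hfix : ∀ i, x.1 * x.2.1.1 i * x.1⁻¹ = x.2.1.1 i := fun i =>
      congrFun (congrArg Subtype.val x.2.2) i
    have hc : ∀ i, x.1 * x.2.1.1 i = x.2.1.1 i * x.1 := fun i => by
      have := hfix i; rwa [mul_inv_eq_iff_eq_mul] at this
    intro j k
    refine Fin.cases ?_ ?_ j <;> [skip; intro j'] <;>
      refine Fin.cases ?_ ?_ k <;> try intro k'
    · rfl
    · simp [hc]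
    · simp [hc]
    · simp [x.2.1.2]⟩
  left_inv f := Subtype.ext <| funext fun i => Fin.cases rfl (fun j => by simp) i
  right_inv x := by
    refine Sigma.ext rfl ?_
    simp only [Fin.cons_zero, heq_eq_eq]
    exact heq_of_eq (Subtype.ext (Subtype.ext (funext fun i => by simp)))

instance (m : ℕ) [Finite G] : Finite (CommTuple G m) :=
  inferInstanceAs (Finite {f : Fin m → G // ∀ j k, f j * f k = f k * f j})

end

theorem stmt_16 (n l : ℕ) (hn : 1 ≤ n) (hl : 1 ≤ l) :
    n.factorial ∣
      Nat.card {f : Fin l → Equiv.Perm (Fin n) // ∀ j k, f j * f k = f k * f j} := by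
  classical
  obtain ⟨m, rfl⟩ : ∃ m, l = m + 1 := ⟨l - 1, (Nat.succ_pred_eq_of_pos hl).symm⟩
  set G := Equiv.Perm (Fin n)
  letI : ∀ g : G, Fintype (fixedBy (CommTuple G m) g) := fun g => Fintype.ofFinite _
  letI : Fintype (Quotient (orbitRel G (CommTuple G m))) := Fintype.ofFinite _
  have key : Nat.card {f : Fin (m + 1) → G // ∀ j k, f j * f k = f k * f j} =
      Fintype.card (Quotient (orbitRel G (CommTuple G m))) * Fintype.card G := by
    rw [Nat.card_eq_fintype_card, Fintype.card_congr (commTupleEquiv G m),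
      Fintype.card_sigma, MulAction.sum_card_fixedBy_eq_card_orbits_mul_card_group]
  rw [key]
  have : n.factorial = Fintype.card G := by
    simp [G, Fintype.card_perm]
  rw [this]
  exact Dvd.intro_left _ rfl
end

section
/- For real μ > 0 and ν > 0, as n → ∞ one has 2·n^{−(μ+ν)} − (n+1)^{−μ}(n−1)^{−ν} − (n+1)^{−ν}(n−1)^{−μ} = O(n^{−(μ+ν)−2}). -/
open Filter Asymptotics

/-- If `f` has derivative `f'` near `0`, `f 0 = 0`, `f' 0 = 0` and `f'` is
differentiable at `0`, then `f = O(x^2)` near `0`. -/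
lemma quad_isBigO {f f' : ℝ → ℝ}
    (hd : ∀ x ∈ Set.Ioo (-1 : ℝ) 1, HasDerivAt f (f' x) x)
    (h0 : f 0 = 0) (h'0 : f' 0 = 0) (h'd : DifferentiableAt ℝ f' 0) :
    f =O[nhds (0 : ℝ)] fun x => x ^ 2 := by
  have hO : f' =O[nhds (0 : ℝ)] fun x => x := by
    simpa [h'0] using h'd.isBigO_sub
  obtain ⟨C, hC0, hCw⟩ := hO.exists_nonneg
  have hC := hCw.bound
  rw [Metric.eventually_nhds_iff] at hC
  obtain ⟨δ, hδ0, hδ⟩ := hC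
  rw [isBigO_iff]
  refine ⟨C, ?_⟩
  rw [Metric.eventually_nhds_iff]
  refine ⟨min δ 1, by positivity, fun x hx => ?_⟩
  have hx' : |x| < min δ 1 := by simpa [Real.dist_eq] using hx
  have habs : ∀ t ∈ Set.uIcc (0 : ℝ) x, |t| ≤ |x| := by
    intro t ht
    rcases le_total 0 x with h | h
    · rw [Set.uIcc_of_le h] at ht
      rw [abs_of_nonneg ht.1, abs_of_nonneg h]; exact ht.2
    · rw [Set.uIcc_of_ge h] at ht
      rw [abs_of_nonpos ht.2, abs_of_nonpos h]; exact neg_le_neg ht.1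
  have hsub : Set.uIcc (0 : ℝ) x ⊆ Set.Ioo (-1 : ℝ) 1 := by
    intro t ht
    have := (habs t ht).trans_lt (hx'.trans_le (min_le_right _ _))
    exact abs_lt.mp this
  have hmvt : ‖f x - f 0‖ ≤ C * |x| * ‖x - 0‖ := by
    apply (convex_uIcc (0:ℝ) x).norm_image_sub_le_of_norm_hasDerivWithin_le
      (fun t ht => (hd t (hsub ht)).hasDerivWithinAt)
      (fun t ht => ?_) (Set.left_mem_uIcc) (Set.right_mem_uIcc)
    have hb : ‖f' t‖ ≤ C * ‖t‖ := by
      apply hδ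
      simpa [Real.dist_eq] using
        (habs t ht).trans_lt (hx'.trans_le (min_le_left _ _))
    calc ‖f' t‖ ≤ C * ‖t‖ := hb
      _ ≤ C * |x| := by
          apply mul_le_mul_of_nonneg_left _ hC0
          simpa [Real.norm_eq_abs] using habs t ht
  rw [h0, sub_zero, sub_zero] at hmvt
  calc ‖f x‖ ≤ C * |x| * ‖x‖ := hmvt
    _ = C * ‖x ^ 2‖ := by
        rw [Real.norm_eq_abs, Real.norm_eq_abs, abs_pow]
        ring

theorem stmt_18 (m v : ℝ) (hm : 0 < m) (hv : 0 < v) :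
    (fun n : ℝ => 2 * n ^ (-(m + v)) - (n + 1) ^ (-m) * (n - 1) ^ (-v)
        - (n + 1) ^ (-v) * (n - 1) ^ (-m))
      =O[atTop] fun n : ℝ => n ^ (-(m + v) - 2) := by
  set G : ℝ → ℝ := fun x =>
    2 - (1 + x) ^ (-m) * (1 - x) ^ (-v) - (1 + x) ^ (-v) * (1 - x) ^ (-m) with hGdef
  set G' : ℝ → ℝ := fun x =>
    -((1 * -m * (1 + x) ^ (-m - 1)) * (1 - x) ^ (-v)
        + (1 + x) ^ (-m) * (-1 * -v * (1 - x) ^ (-v - 1)))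
    - ((1 * -v * (1 + x) ^ (-v - 1)) * (1 - x) ^ (-m)
        + (1 + x) ^ (-v) * (-1 * -m * (1 - x) ^ (-m - 1))) with hG'def
  have hd : ∀ x ∈ Set.Ioo (-1 : ℝ) 1, HasDerivAt G (G' x) x := by
    intro x hx
    have h1 : (0:ℝ) < 1 + x := by linarith [hx.1]
    have h2 : (0:ℝ) < 1 - x := by linarith [hx.2]
    have hA : HasDerivAt (fun y : ℝ => (1 + y) ^ (-m)) (1 * -m * (1 + x) ^ (-m - 1)) x :=
      (HasDerivAt.const_add 1 (hasDerivAt_id x)).rpow_const (Or.inl h1.ne')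
    have hB : HasDerivAt (fun y : ℝ => (1 - y) ^ (-v)) (-1 * -v * (1 - x) ^ (-v - 1)) x :=
      ((hasDerivAt_id x).const_sub 1).rpow_const (Or.inl h2.ne')
    have hCd : HasDerivAt (fun y : ℝ => (1 + y) ^ (-v)) (1 * -v * (1 + x) ^ (-v - 1)) x :=
      (HasDerivAt.const_add 1 (hasDerivAt_id x)).rpow_const (Or.inl h1.ne')
    have hDd : HasDerivAt (fun y : ℝ => (1 - y) ^ (-m)) (-1 * -m * (1 - x) ^ (-m - 1)) x :=
      ((hasDerivAt_id x).const_sub 1).rpow_const (Or.inl h2.ne')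
    have := ((hasDerivAt_const x (2:ℝ)).sub (hA.mul hB)).sub (hCd.mul hDd)
    convert this using 1
    · rfl
    · rfl
    · rfl
    simp only [hG'def]
    ring
  have h0 : G 0 = 0 := by
    simp only [hGdef]
    norm_num
  have h'0 : G' 0 = 0 := by
    simp only [hG'def]
    norm_num
  have h'd : DifferentiableAt ℝ G' 0 := by
    have d1 : DifferentiableAt ℝ (fun x : ℝ => 1 + x) 0 := by fun_prop
    have d2 : DifferentiableAt ℝ (fun x : ℝ => 1 - x) 0 := by fun_prop
    have h1 : (fun x : ℝ => 1 + x) 0 ≠ 0 := by norm_num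
    have h2 : (fun x : ℝ => 1 - x) 0 ≠ 0 := by norm_num
    have dm1 : DifferentiableAt ℝ (fun x : ℝ => (1 + x) ^ (-m)) 0 := d1.rpow_const (Or.inl h1)
    have dm2 : DifferentiableAt ℝ (fun x : ℝ => (1 + x) ^ (-m - 1)) 0 := d1.rpow_const (Or.inl h1)
    have dv1 : DifferentiableAt ℝ (fun x : ℝ => (1 + x) ^ (-v)) 0 := d1.rpow_const (Or.inl h1)
    have dv2 : DifferentiableAt ℝ (fun x : ℝ => (1 + x) ^ (-v - 1)) 0 := d1.rpow_const (Or.inl h1)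
    have em1 : DifferentiableAt ℝ (fun x : ℝ => (1 - x) ^ (-m)) 0 := d2.rpow_const (Or.inl h2)
    have em2 : DifferentiableAt ℝ (fun x : ℝ => (1 - x) ^ (-m - 1)) 0 := d2.rpow_const (Or.inl h2)
    have ev1 : DifferentiableAt ℝ (fun x : ℝ => (1 - x) ^ (-v)) 0 := d2.rpow_const (Or.inl h2)
    have ev2 : DifferentiableAt ℝ (fun x : ℝ => (1 - x) ^ (-v - 1)) 0 := d2.rpow_const (Or.inl h2)
    simp only [hG'def]
    exact (((dm2.const_mul _).mul ev1).add (dm1.mul (ev2.const_mul _))).neg.sub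
      (((dv2.const_mul _).mul em1).add (dv1.mul (em2.const_mul _)))
  have hG : G =O[nhds (0:ℝ)] fun x => x ^ 2 := quad_isBigO hd h0 h'0 h'd
  have hcomp : (fun n : ℝ => G n⁻¹) =O[atTop] fun n : ℝ => (n⁻¹) ^ 2 :=
    hG.comp_tendsto tendsto_inv_atTop_zero
  have hmul : (fun n : ℝ => n ^ (-(m + v)) * G n⁻¹)
      =O[atTop] fun n : ℝ => n ^ (-(m + v)) * (n⁻¹) ^ 2 :=
    (isBigO_refl (fun n : ℝ => n ^ (-(m + v))) atTop).mul hcomp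
  apply hmul.congr' <;> filter_upwards [eventually_gt_atTop (1:ℝ)] with n hn
  · have hn0 : (0:ℝ) < n := lt_trans one_pos hn
    have e1 : n * (1 + n⁻¹) = n + 1 := by field_simp
    have e2 : n * (1 - n⁻¹) = n - 1 := by field_simp
    have hp1 : (0:ℝ) ≤ 1 + n⁻¹ := by positivity
    have hp2 : (0:ℝ) ≤ 1 - n⁻¹ := by
      have : n⁻¹ < 1 := by
        rw [inv_lt_one_iff₀]; right; exact hn
      linarith
    have key : ∀ p : ℝ, n ^ (-p) * (1 + n⁻¹) ^ (-p) = (n + 1) ^ (-p) := by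
      intro p
      rw [← Real.mul_rpow hn0.le hp1, e1]
    have key2 : ∀ p : ℝ, n ^ (-p) * (1 - n⁻¹) ^ (-p) = (n - 1) ^ (-p) := by
      intro p
      rw [← Real.mul_rpow hn0.le hp2, e2]
    have hsplit : n ^ (-(m + v)) = n ^ (-m) * n ^ (-v) := by
      rw [← Real.rpow_add hn0]; ring_nf
    simp only [hGdef]
    rw [← key m, ← key2 v, ← key v, ← key2 m, hsplit]
    ring
  · have hn0 : (0:ℝ) < n := lt_trans one_pos hn
    have h2n : n ^ ((2:ℝ)) = n ^ (2:ℕ) := by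
      rw [← Real.rpow_natCast n 2]; norm_num
    rw [Real.rpow_sub hn0, h2n, div_eq_mul_inv, inv_pow]
end
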